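/- Let n be a positive integer such that 2^n − 1 is prime, and let q = 2^n. Let M be the (q−1)×(q−1) Vandermonde matrix over F_q with entries m_{i,j} = α^{(i-1)(j-1)} where α is a primitive element of F_q. Then M is invertible, all entries of M are nonzero, and every 2×2 submatrix of M is invertible. Hence M defines a linear (2, 2^n − 1, 2^n)-strong AONT. -/

import Mathlib

/-- Let 2^n − 1 be prime, q = 2^n, α a primitive element of F_q, and M the
(q−1)×(q−1) Vandermonde matrix with m_{i,j} = α^{(i-1)(j-1)} (0-indexed: α^{i·j}). Then M is
invertible, all its entries are nonzero, and every 2×2 submatrix of M is invertible; hence M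
defines a linear (2, 2^n−1, 2^n)-strong AONT. -/
theorem stmt14 {n : ℕ} (hn : 0 < n) (hprime : Nat.Prime (2 ^ n - 1))
    (F : Type*) [Field F] [Fintype F] (hcard : Fintype.card F = 2 ^ n)
    (α : F) (hα : ∀ x : F, x ≠ 0 → ∃ m : ℕ, α ^ m = x)
    (M : Matrix (Fin (2 ^ n - 1)) (Fin (2 ^ n - 1)) F)
    (hM : ∀ i j, M i j = α ^ ((i : ℕ) * (j : ℕ))) :
    IsUnit M.det ∧
    (∀ i j, M i j ≠ 0) ∧
    (∀ i1 i2 j1 j2, i1 ≠ i2 → j1 ≠ j2 →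
      M i1 j1 * M i2 j2 ≠ M i1 j2 * M i2 j1) := by
  classical
  have hn2 : 2 ≤ n := by
    by_contra h
    have : n = 1 := by omega
    subst this
    norm_num at hprime
  have hcard4 : 4 ≤ Fintype.card F := by
    rw [hcard]
    calc (4:ℕ) = 2 ^ 2 := rfl
    _ ≤ 2 ^ n := Nat.pow_le_pow_right (by norm_num) hn2
  obtain ⟨x, hx0, hx1⟩ : ∃ x : F, x ≠ 0 ∧ x ≠ 1 := by
    by_contra h
    push_neg at h
    have hsub : (Finset.univ : Finset F) ⊆ {0, 1} := by
      intro y _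
      rcases eq_or_ne y 0 with h0 | h0
      · simp [h0]
      · simp [h y h0]
    have hle := Finset.card_le_card hsub
    have h2 : ({0,1} : Finset F).card ≤ 2 :=
      (Finset.card_insert_le _ _).trans (by simp)
    rw [Finset.card_univ] at hle
    omega
  obtain ⟨m, hm⟩ := hα x hx0
  have hα0 : α ≠ 0 := by
    rintro rfl
    rcases Nat.eq_zero_or_pos m with rfl | hmp
    · simp at hm; exact hx1 hm.symm
    · rw [zero_pow hmp.ne'] at hm; exact hx0 hm.symm
  have hα1 : α ≠ 1 := by
    rintro rfl
    simp at hm; exact hx1 hm.symm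
  have hppos : 0 < 2 ^ n - 1 := hprime.pos
  have hfermat : α ^ (2 ^ n - 1) = 1 := by
    have := FiniteField.pow_card_sub_one_eq_one α hα0
    rwa [hcard] at this
  have hdvd : orderOf α ∣ 2 ^ n - 1 := orderOf_dvd_of_pow_eq_one hfermat
  have hord : orderOf α = 2 ^ n - 1 := by
    rcases (Nat.Prime.eq_one_or_self_of_dvd hprime _ hdvd) with h | h
    · exact absurd (orderOf_eq_one_iff.mp h) hα1
    · exact h
  set u : Fˣ := Units.mk0 α hα0 with hu
  have hordu : orderOf u = 2 ^ n - 1 := by rw [← hord, ← orderOf_units]; rfl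
  have key : ∀ a b : ℕ, α ^ a = α ^ b ↔ a ≡ b [MOD 2 ^ n - 1] := by
    intro a b
    rw [← hordu, ← pow_eq_pow_iff_modEq]
    constructor
    · intro h; ext; simpa [hu] using h
    · intro h; have := congrArg (Units.val) h; simpa [hu] using this
  have hinj : Function.Injective (fun i : Fin (2 ^ n - 1) => α ^ (i : ℕ)) := by
    intro i j hij
    have hmod := (key _ _).mp hij
    unfold Nat.ModEq at hmod
    rw [Nat.mod_eq_of_lt i.isLt, Nat.mod_eq_of_lt j.isLt] at hmod
    exact Fin.ext hmod
  refine ⟨?_, ?_, ?_⟩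
  · have hMeq : M = Matrix.vandermonde (fun i : Fin (2 ^ n - 1) => α ^ (i : ℕ)) := by
      funext i j
      rw [hM, Matrix.vandermonde, Matrix.of_apply, ← pow_mul]
    rw [hMeq, isUnit_iff_ne_zero]
    exact Matrix.det_vandermonde_ne_zero_iff.mpr hinj
  · intro i j
    rw [hM]
    exact pow_ne_zero _ hα0
  · intro i1 i2 j1 j2 hi hj
    rw [hM, hM, hM, hM, ← pow_add, ← pow_add]
    intro h
    have hmod := (key _ _).mp h
    haveI : Fact (Nat.Prime (2 ^ n - 1)) := ⟨hprime⟩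
    have hz : (((i1:ℕ) * j1 + (i2:ℕ) * j2 : ℕ) : ZMod (2 ^ n - 1)) =
        (((i1:ℕ) * j2 + (i2:ℕ) * j1 : ℕ) : ZMod (2 ^ n - 1)) :=
      (ZMod.natCast_eq_natCast_iff _ _ _).mpr hmod
    have hfac : (((i1:ℕ) : ZMod (2 ^ n - 1)) - (i2:ℕ)) * (((j1:ℕ) : ZMod (2 ^ n - 1)) - (j2:ℕ)) = 0 := by
      push_cast at hz
      linear_combination hz
    have hcastinj : ∀ a b : Fin (2 ^ n - 1),
        ((a:ℕ) : ZMod (2 ^ n - 1)) = ((b:ℕ) : ZMod (2 ^ n - 1)) → a = b := by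
      intro a b hab
      have := congrArg ZMod.val hab
      rw [ZMod.val_natCast_of_lt a.isLt, ZMod.val_natCast_of_lt b.isLt] at this
      exact Fin.ext this
    rcases mul_eq_zero.mp hfac with h0 | h0
    · exact hi (hcastinj _ _ (by rwa [sub_eq_zero] at h0))
    · exact hj (hcastinj _ _ (by rwa [sub_eq_zero] at h0))
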